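/- Let 2 ≤ l < m and suppose η₀ ∈ ℝ^p satisfies Φ_j η₀ = Y_j for every j = 1,…,l. For r > 0 let Λ_r be the n×n diagonal matrix whose diagonal entry in a row corresponding to a degree-j monomial is r^{j−2}, and let η_r ∈ ℝ^p be any minimizer of η ↦ ‖Y − Λ_r Φ η‖₂ over ℝ^p. Then for every r > 0 and every i ∈ {1,…,l+1}: r^{2(i−2)} ‖Y_i − Φ_i η_r‖₂² ≤ Σ_{j=l+1}^{m} r^{2(j−2)} ‖Y_j − Φ_j η₀‖₂². -/
import Mathlib


open Finset

noncomputable section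

/-- The Euclidean (ℓ²) norm of a finitely-indexed real vector. -/
def l2norm {ι : Type*} [Fintype ι] (v : ι → ℝ) : ℝ :=
  Real.sqrt (∑ i, v i ^ 2)

/-- Index type for the monomials `x^a y^b` in two variables with `1 ≤ a + b ≤ m`. -/
abbrev MonIdx (m : ℕ) :=
  {ab : Fin (m + 1) × Fin (m + 1) // 1 ≤ (ab.1 : ℕ) + (ab.2 : ℕ) ∧ (ab.1 : ℕ) + (ab.2 : ℕ) ≤ m}

/-- The total degree of a monomial index. -/
def monDeg {m : ℕ} (i : MonIdx m) : ℕ := (i.1.1 : ℕ) + (i.1.2 : ℕ)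

/-- The monomial `x^a y^b` as a function on `ℝ²`. -/
def monomial {m : ℕ} (i : MonIdx m) (v : ℝ × ℝ) : ℝ :=
  v.1 ^ ((i.1.1 : ℕ)) * v.2 ^ ((i.1.2 : ℕ))

/-- The vector `Y`, whose `i`-th entry is `Δφᵢ(0,0)`: it equals `2` exactly when `φᵢ` is
`x²` or `y²`, and `0` otherwise. -/
def Yvec {m : ℕ} (i : MonIdx m) : ℝ :=
  if ((i.1.1 : ℕ) = 2 ∧ (i.1.2 : ℕ) = 0) ∨ ((i.1.1 : ℕ) = 0 ∧ (i.1.2 : ℕ) = 2) then 2 else 0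

/-- The matrix `Φ(r)` with entries `φᵢ(r xₖ)`. -/
def PhiMat {m p : ℕ} (x : Fin p → ℝ × ℝ) (r : ℝ) : Matrix (MonIdx m) (Fin p) ℝ :=
  Matrix.of fun i k => monomial i (r • x k)

/-- The key inequality (Eq. (B.3)–(B.4)) in the proof of Lemma 3.2: if `η₀` solves the block
system up to degree `l` (with `2 ≤ l < m`) and `η_r` minimizes `η ↦ ‖Y − Λ_r Φ η‖₂`, where
`Λ_r` is diagonal with entry `r^(j−2)` on rows of degree `j`, then for every `r > 0` and every
`i ∈ {1,…,l+1}`,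
`r^{2(i−2)} ‖Y_i − Φ_i η_r‖₂² ≤ ∑_{j=l+1}^{m} r^{2(j−2)} ‖Y_j − Φ_j η₀‖₂²`. -/
theorem stmt3 {p m : ℕ} (hm : 2 ≤ m) (x : Fin p → ℝ × ℝ) (l : ℕ)
    (hl2 : 2 ≤ l) (hlm : l < m)
    (η₀ : Fin p → ℝ)
    (hsol : ∀ i : MonIdx m, monDeg i ≤ l → (PhiMat x 1).mulVec η₀ i = Yvec i)
    (r : ℝ) (hr : 0 < r)
    (ηr : Fin p → ℝ)
    (hmin : ∀ η : Fin p → ℝ,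
      l2norm (fun i : MonIdx m => Yvec i -
          (Matrix.diagonal (fun j : MonIdx m => r ^ ((monDeg j : ℤ) - 2))).mulVec
            ((PhiMat x 1).mulVec ηr) i) ≤
        l2norm (fun i : MonIdx m => Yvec i -
          (Matrix.diagonal (fun j : MonIdx m => r ^ ((monDeg j : ℤ) - 2))).mulVec
            ((PhiMat x 1).mulVec η) i)) :
    ∀ i : ℕ, 1 ≤ i → i ≤ l + 1 →
      r ^ (2 * ((i : ℤ) - 2)) *
          ∑ row ∈ Finset.univ.filter (fun row : MonIdx m => monDeg row = i),
            (Yvec row - (PhiMat x 1).mulVec ηr row) ^ 2 ≤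
        ∑ j ∈ Finset.Icc (l + 1) m,
          r ^ (2 * ((j : ℤ) - 2)) *
            ∑ row ∈ Finset.univ.filter (fun row : MonIdx m => monDeg row = j),
              (Yvec row - (PhiMat x 1).mulVec η₀ row) ^ 2 := by
  intro i hi1 hil
  have hrne : r ≠ 0 := ne_of_gt hr
  set Φv : (Fin p → ℝ) → MonIdx m → ℝ := fun η => (PhiMat x 1).mulVec η with hΦv
  have hY0 : ∀ row : MonIdx m, monDeg row ≠ 2 → Yvec row = 0 := by
    intro row h
    unfold Yvec
    rw [if_neg]
    rintro (⟨h1, h2⟩ | ⟨h1, h2⟩) <;> exact h (by simp [monDeg, h1, h2])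
  -- termwise rewriting
  have key : ∀ (η : Fin p → ℝ) (row : MonIdx m),
      (Yvec row -
        (Matrix.diagonal (fun j : MonIdx m => r ^ ((monDeg j : ℤ) - 2))).mulVec (Φv η) row) ^ 2
        = r ^ (2 * ((monDeg row : ℤ) - 2)) * (Yvec row - Φv η row) ^ 2 := by
    intro η row
    rw [Matrix.mulVec_diagonal]
    have h1 : Yvec row - r ^ ((monDeg row : ℤ) - 2) * Φv η row
        = r ^ ((monDeg row : ℤ) - 2) * (Yvec row - Φv η row) := by
      by_cases h2 : monDeg row = 2
      · rw [h2]; norm_num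
      · rw [hY0 row h2]; ring
    rw [h1, mul_pow]
    congr 1
    rw [← zpow_natCast (r ^ ((monDeg row : ℤ) - 2)) 2, ← zpow_mul, mul_comm]
    norm_num
  -- membership of degrees
  have hmem : ∀ row : MonIdx m, monDeg row ∈ Finset.Icc 1 m := fun row =>
    Finset.mem_Icc.mpr ⟨row.2.1, row.2.2⟩
  -- grouping
  have grp : ∀ η : Fin p → ℝ,
      ∑ row : MonIdx m, r ^ (2 * ((monDeg row : ℤ) - 2)) * (Yvec row - Φv η row) ^ 2
        = ∑ j ∈ Finset.Icc 1 m, r ^ (2 * ((j : ℤ) - 2)) *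
            ∑ row ∈ Finset.univ.filter (fun row : MonIdx m => monDeg row = j),
              (Yvec row - Φv η row) ^ 2 := by
    intro η
    rw [← Finset.sum_fiberwise_of_maps_to (g := monDeg) (t := Finset.Icc 1 m)
      (fun row _ => hmem row)]
    refine Finset.sum_congr rfl fun j _ => ?_
    rw [Finset.mul_sum]
    refine Finset.sum_congr rfl fun row hrow => ?_
    rw [(Finset.mem_filter.mp hrow).2]
  -- minimization inequality on sums
  have hsum : ∑ row : MonIdx m, r ^ (2 * ((monDeg row : ℤ) - 2)) * (Yvec row - Φv ηr row) ^ 2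
      ≤ ∑ row : MonIdx m, r ^ (2 * ((monDeg row : ℤ) - 2)) * (Yvec row - Φv η₀ row) ^ 2 := by
    have h := hmin η₀
    unfold l2norm at h
    have hnn : (0:ℝ) ≤ ∑ row : MonIdx m,
        (Yvec row -
          (Matrix.diagonal (fun j : MonIdx m => r ^ ((monDeg j : ℤ) - 2))).mulVec (Φv η₀) row) ^ 2 :=
      Finset.sum_nonneg fun _ _ => sq_nonneg _
    have h2 := (Real.sqrt_le_sqrt_iff hnn).mp h
    calc ∑ row : MonIdx m, r ^ (2 * ((monDeg row : ℤ) - 2)) * (Yvec row - Φv ηr row) ^ 2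
        = ∑ row : MonIdx m, (Yvec row -
            (Matrix.diagonal (fun j : MonIdx m => r ^ ((monDeg j : ℤ) - 2))).mulVec (Φv ηr) row) ^ 2 := by
          exact (Finset.sum_congr rfl fun row _ => (key ηr row)).symm
      _ ≤ ∑ row : MonIdx m, (Yvec row -
            (Matrix.diagonal (fun j : MonIdx m => r ^ ((monDeg j : ℤ) - 2))).mulVec (Φv η₀) row) ^ 2 := h2
      _ = ∑ row : MonIdx m, r ^ (2 * ((monDeg row : ℤ) - 2)) * (Yvec row - Φv η₀ row) ^ 2 :=
          Finset.sum_congr rfl fun row _ => key η₀ row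
  -- RHS simplification for η₀
  have hzero : ∀ j ∈ Finset.Icc 1 m, j ∉ Finset.Icc (l + 1) m →
      r ^ (2 * ((j : ℤ) - 2)) *
        ∑ row ∈ Finset.univ.filter (fun row : MonIdx m => monDeg row = j),
          (Yvec row - Φv η₀ row) ^ 2 = 0 := by
    intro j hj hj'
    have hjl : j ≤ l := by
      rcases Finset.mem_Icc.mp hj with ⟨_, hjm⟩
      by_contra h
      exact hj' (Finset.mem_Icc.mpr ⟨by omega, hjm⟩)
    have : ∑ row ∈ Finset.univ.filter (fun row : MonIdx m => monDeg row = j),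
        (Yvec row - Φv η₀ row) ^ 2 = 0 := by
      refine Finset.sum_eq_zero fun row hrow => ?_
      have hdeg : monDeg row = j := (Finset.mem_filter.mp hrow).2
      have := hsol row (by omega)
      simp [hΦv, this]
    rw [this, mul_zero]
  have him : i ∈ Finset.Icc 1 m := Finset.mem_Icc.mpr ⟨hi1, by omega⟩
  calc r ^ (2 * ((i : ℤ) - 2)) *
        ∑ row ∈ Finset.univ.filter (fun row : MonIdx m => monDeg row = i),
          (Yvec row - Φv ηr row) ^ 2
      ≤ ∑ j ∈ Finset.Icc 1 m, r ^ (2 * ((j : ℤ) - 2)) *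
          ∑ row ∈ Finset.univ.filter (fun row : MonIdx m => monDeg row = j),
            (Yvec row - Φv ηr row) ^ 2 := by
        exact Finset.single_le_sum (s := Finset.Icc 1 m)
          (f := fun j : ℕ => r ^ (2 * ((j : ℤ) - 2)) *
            ∑ row ∈ Finset.univ.filter (fun row : MonIdx m => monDeg row = j),
              (Yvec row - Φv ηr row) ^ 2)
          (fun j _ => mul_nonneg (zpow_nonneg hr.le _)
            (Finset.sum_nonneg fun _ _ => sq_nonneg _)) him
    _ = ∑ row : MonIdx m, r ^ (2 * ((monDeg row : ℤ) - 2)) * (Yvec row - Φv ηr row) ^ 2 :=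
        (grp ηr).symm
    _ ≤ ∑ row : MonIdx m, r ^ (2 * ((monDeg row : ℤ) - 2)) * (Yvec row - Φv η₀ row) ^ 2 := hsum
    _ = ∑ j ∈ Finset.Icc 1 m, r ^ (2 * ((j : ℤ) - 2)) *
          ∑ row ∈ Finset.univ.filter (fun row : MonIdx m => monDeg row = j),
            (Yvec row - Φv η₀ row) ^ 2 := grp η₀
    _ = ∑ j ∈ Finset.Icc (l + 1) m, r ^ (2 * ((j : ℤ) - 2)) *
          ∑ row ∈ Finset.univ.filter (fun row : MonIdx m => monDeg row = j),
            (Yvec row - Φv η₀ row) ^ 2 :=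
        (Finset.sum_subset (Finset.Icc_subset_Icc_left (by omega)) hzero).symm
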